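/- For every real q with 0 < q ≤ 32/27, there exists a unique real number v with −3q/4 ≤ v < −q/2 satisfying v³ − 2qv − q² = 0. Moreover, if in addition 0 < q < 1, then this root v satisfies v > −q/(1 + (1−q)^{1/4}). -/

import Mathlib

/-- For `0 < q ≤ 32/27` there is a unique real `v` with `-3q/4 ≤ v < -q/2` satisfying
`v³ - 2qv - q² = 0`; moreover if `q < 1` then this root satisfies
`v > -q/(1 + (1-q)^{1/4})`. -/
theorem diamond_fixed_point_exists_unique (q : ℝ) (hq0 : 0 < q) (hq : q ≤ 32 / 27) :
    (∃! v : ℝ, -3 * q / 4 ≤ v ∧ v < -q / 2 ∧ v ^ 3 - 2 * q * v - q ^ 2 = 0) ∧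
    (q < 1 → ∀ v : ℝ, -3 * q / 4 ≤ v → v < -q / 2 → v ^ 3 - 2 * q * v - q ^ 2 = 0 →
      -q / (1 + (1 - q) ^ ((4 : ℝ)⁻¹)) < v) := by
  have huniq : ∀ v w : ℝ, -3*q/4 ≤ v → v < -q/2 → -3*q/4 ≤ w → w < -q/2 →
      v^3 - 2*q*v - q^2 = 0 → w^3 - 2*q*w - q^2 = 0 → v = w := by
    intro v w hv1 hv2 hw1 hw2 hv hw
    by_contra hne
    have hfac : (v - w) * (v^2 + v*w + w^2 - 2*q) = 0 := by linear_combination hv - hw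
    have h2 : v^2 + v*w + w^2 = 2*q := by
      rcases mul_eq_zero.1 hfac with h | h
      · exact absurd (sub_eq_zero.1 h) hne
      · linarith [sub_eq_zero.1 (by linarith : v^2 + v*w + w^2 - 2*q = 0)]
    have hvw : v - w ≠ 0 := sub_ne_zero.mpr hne
    have hne2 : (v - w)^2 > 0 := by positivity
    nlinarith [mul_nonneg (by linarith : (0:ℝ) ≤ v + 3*q/4) (by linarith : (0:ℝ) ≤ w + 3*q/4),
      mul_nonneg (by linarith : (0:ℝ) ≤ v + 3*q/4) (by linarith : (0:ℝ) ≤ -q/2 - v),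
      mul_nonneg (by linarith : (0:ℝ) ≤ w + 3*q/4) (by linarith : (0:ℝ) ≤ -q/2 - w),
      mul_pos (by linarith : (0:ℝ) < -v) (by linarith : (0:ℝ) < -w), hne2, sq_nonneg (v+w+3*q/2)]
  constructor
  · -- existence and uniqueness
    have hab : -3*q/4 ≤ -q/2 := by linarith
    have hcont : ContinuousOn (fun v : ℝ => v ^ 3 - 2*q*v - q^2) (Set.Icc (-3*q/4) (-q/2)) := by
      fun_prop
    have h0 : (0:ℝ) ∈ Set.Icc ((-q/2) ^ 3 - 2*q*(-q/2) - q^2) ((-3*q/4) ^ 3 - 2*q*(-3*q/4) - q^2) := by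
      constructor <;> nlinarith [sq_nonneg q, pow_pos hq0 3]
    obtain ⟨v, hv, hfv⟩ := intermediate_value_Icc' hab hcont h0
    have hvlt : v < -q/2 := by
      refine lt_of_le_of_ne hv.2 ?_
      intro h
      rw [h] at hfv
      nlinarith [pow_pos hq0 3]
    exact ⟨v, ⟨hv.1, hvlt, hfv⟩, fun w hw => huniq w v hw.1 hw.2.1 hv.1 hvlt hw.2.2 hfv⟩
  · -- lower bound
    intro hq1 v hv1 hv2 hveq
    set r : ℝ := (1 - q) ^ ((4 : ℝ)⁻¹) with hr
    have h1q : (0:ℝ) < 1 - q := by linarith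
    have hr0 : 0 < r := Real.rpow_pos_of_pos h1q _
    have hr1 : r < 1 := by
      apply Real.rpow_lt_one (by linarith) (by linarith) (by norm_num)
    have hr4 : r ^ 4 = 1 - q := by
      rw [hr, ← Real.rpow_natCast ((1-q) ^ ((4:ℝ)⁻¹)) 4, ← Real.rpow_mul (le_of_lt h1q)]
      norm_num
    set w : ℝ := -q / (1 + r) with hw
    have hden : (0:ℝ) < 1 + r := by linarith
    have hfw : w ^ 3 - 2*q*w - q^2 = q^2 * (r * (1-r)^2 * (1+r)) / (1+r)^3 := by
      rw [hw]
      field_simp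
      linear_combination (-1) * hr4
    have hfwpos : 0 < w ^ 3 - 2*q*w - q^2 := by
      rw [hfw]
      have h2 : (0:ℝ) < 1 - r := by linarith
      exact div_pos (mul_pos (pow_pos hq0 2) (mul_pos (mul_pos hr0 (pow_pos h2 2)) hden))
        (pow_pos hden 3)
    rcases lt_or_ge w (-3*q/4) with h | hwl
    · calc w < -3*q/4 := h
        _ ≤ v := hv1
    · have hwu : w < -q/2 := by
        rw [hw, div_lt_div_iff₀ hden (by norm_num : (0:ℝ) < 2)]
        nlinarith
      by_contra hcon
      push_neg at hcon
      have hfac : (w - v) * (w^2 + w*v + v^2 - 2*q) = w ^ 3 - 2*q*w - q^2 := by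
        linear_combination -hveq
      have hkey : (0:ℝ) ≤ 2*q - (w^2 + w*v + v^2) := by
        nlinarith [mul_nonneg (by linarith : (0:ℝ) ≤ v + 3*q/4) (by linarith : (0:ℝ) ≤ -q/2 - v),
          mul_nonneg (by linarith : (0:ℝ) ≤ w + 3*q/4) (by linarith : (0:ℝ) ≤ -q/2 - w),
          mul_pos (by linarith : (0:ℝ) < -v) (by linarith : (0:ℝ) < -w)]
      nlinarith [hfwpos, hfac, mul_nonneg (by linarith : (0:ℝ) ≤ w - v) hkey]
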